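/- arXiv:1912.08526 — 3 statements merged into one kernel-verified Lean document; each statement's English description precedes it below -/
import Mathlib

section
/- Let N, d ≥ 1, let J ∈ ℝ^{N×d} be such that J·Jᵀ is invertible, let Y, ŷ₀ ∈ ℝ^N, θ₀ ∈ ℝ^d and η > 0. Then the function θ : ℝ → ℝ^d defined by θ(t) = θ₀ − Jᵀ·(J·Jᵀ)⁻¹·(I − exp(−(η/N)·t·J·Jᵀ))·(ŷ₀ − Y) satisfies θ(0) = θ₀ and, for every t ∈ ℝ, θ'(t) = −(η/N)·Jᵀ·(ŷ₀ + J·(θ(t) − θ₀) − Y). -/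
open Matrix NormedSpace

attribute [local instance] Matrix.linftyOpNormedRing Matrix.linftyOpNormedAlgebra

/-- Closed-form solution of the lazy-regime weight evolution
`∂_t θ_t = −(η/N)·Jᵀ·(ŷ₀ + J·(θ_t − θ₀) − Y)` for the linearized network. -/
theorem lazy_weight_evolution
    (N d : ℕ) (hN : 1 ≤ N) (hd : 1 ≤ d)
    (J : Matrix (Fin N) (Fin d) ℝ) (hJ : IsUnit (J * Jᵀ).det)
    (Y y0 : Fin N → ℝ) (θ0 : Fin d → ℝ) (η : ℝ) (hη : 0 < η)
    (θ : ℝ → Fin d → ℝ)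
    (hθ : ∀ t, θ t =
      θ0 - Jᵀ.mulVec ((J * Jᵀ)⁻¹.mulVec
        (((1 : Matrix (Fin N) (Fin N) ℝ)
            - exp ((-(η / N) * t) • (J * Jᵀ))).mulVec (y0 - Y)))) :
    θ 0 = θ0 ∧
      ∀ t : ℝ, HasDerivAt θ
        (-(η / N) • Jᵀ.mulVec (y0 + J.mulVec (θ t - θ0) - Y)) t := by
  classical
  set A : Matrix (Fin N) (Fin N) ℝ := J * Jᵀ with hA
  set v : Fin N → ℝ := y0 - Y with hv
  set c : ℝ := -(η / N) with hc
  constructor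
  · simp [hθ 0]
  intro t
  set E : Matrix (Fin N) (Fin N) ℝ := exp ((c * t) • A) with hE
  -- the linear map M ↦ Jᵀ (A⁻¹ (M v))
  set L : Matrix (Fin N) (Fin N) ℝ →ₗ[ℝ] (Fin d → ℝ) :=
    { toFun := fun M => Jᵀ.mulVec (A⁻¹.mulVec (M.mulVec v))
      map_add' := by
        intro M₁ M₂
        simp [Matrix.add_mulVec, Matrix.mulVec_add]
      map_smul' := by
        intro a M
        simp [Matrix.smul_mulVec, Matrix.mulVec_smul] } with hLdef
  have hLapp : ∀ M : Matrix (Fin N) (Fin N) ℝ,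
      L M = Jᵀ.mulVec (A⁻¹.mulVec (M.mulVec v)) := fun _ => rfl
  have hfun : θ = fun s => (θ0 - L 1) + L (exp ((c * s) • A)) := by
    funext s
    rw [hθ s]
    simp only [hLapp, Matrix.sub_mulVec, Matrix.mulVec_sub]
    abel
  -- derivative of the exponential part
  have hexp : HasDerivAt (fun s : ℝ => exp (s • A)) (exp ((c * t) • A) * A) (c * t) :=
    hasDerivAt_exp_smul_const A (c * t)
  have hlin : HasDerivAt (fun s : ℝ => c * s) c t := by
    simpa using (hasDerivAt_id t).const_mul c
  have hf : HasDerivAt (fun s : ℝ => exp ((c * s) • A)) (c • (E * A)) t := by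
    exact hexp.scomp t hlin
  have hLf : HasDerivAt (fun s : ℝ => L (exp ((c * s) • A))) (L (c • (E * A))) t := by
    have := (L.toContinuousLinearMap.hasFDerivAt (x := E)).comp_hasDerivAt t hf
    exact this
  have hθd : HasDerivAt θ (L (c • (E * A))) t := by
    rw [hfun]
    exact hLf.const_add _
  -- identify the derivative value
  have hcomm : E * A = A * E := ((Commute.refl A).smul_left (c * t)).exp_left
  have hEA : L (c • (E * A)) = c • Jᵀ.mulVec (E.mulVec v) := by
    have hinv : A⁻¹ * (A * E) = E := by
      rw [← Matrix.mul_assoc, Matrix.nonsing_inv_mul A hJ, Matrix.one_mul]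
    rw [_root_.map_smul, hLapp, hcomm]
    simp only [Matrix.mulVec_mulVec, hinv]
  have hJθ : J.mulVec (θ t - θ0) = E.mulVec v - v := by
    rw [hθ t]
    have h1 : θ0 - Jᵀ.mulVec (A⁻¹.mulVec
        (((1 : Matrix (Fin N) (Fin N) ℝ) - E).mulVec v)) - θ0
        = -(Jᵀ.mulVec (A⁻¹.mulVec
        (((1 : Matrix (Fin N) (Fin N) ℝ) - E).mulVec v))) := by abel
    rw [h1, Matrix.mulVec_neg, Matrix.mulVec_mulVec, ← hA, Matrix.mulVec_mulVec,
      Matrix.mul_nonsing_inv A hJ, Matrix.one_mulVec,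
      Matrix.sub_mulVec, Matrix.one_mulVec, neg_sub]
  have htarget : y0 + J.mulVec (θ t - θ0) - Y = E.mulVec v := by
    rw [hJθ, hv]
    abel
  rw [hEA] at hθd
  rwa [htarget]
end

section
/- Let N ≥ 1, let Θ₀ ∈ ℝ^{N×N} be a symmetric matrix with orthonormal eigenvectors v₁,…,v_N ∈ ℝ^N and corresponding real eigenvalues λ₁,…,λ_N, let Y, ŷ₀ ∈ ℝ^N, η > 0, and let ŷ(t) = (I − exp(−(η/N)·t·Θ₀))·Y + exp(−(η/N)·t·Θ₀)·ŷ₀. Then for every t ≥ 0, ‖ŷ(t) − Y‖₂² = Σ_{i=1}^N e^{−2(η/N)λ_i t}·(v_iᵀ(ŷ₀ − Y))². -/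
open Matrix NormedSpace Finset

lemma pow_mulVec_eigen {N : ℕ} (A : Matrix (Fin N) (Fin N) ℝ) (w : Fin N → ℝ) (μ : ℝ)
    (h : A.mulVec w = μ • w) (n : ℕ) : (A ^ n).mulVec w = μ ^ n • w := by
  induction n with
  | zero => simp [Matrix.one_mulVec]
  | succ n ih =>
    rw [pow_succ', pow_succ', ← Matrix.mulVec_mulVec, ih, Matrix.mulVec_smul, h,
      smul_smul]
    ring_nf

lemma parseval_aux {N : ℕ} (B : Matrix (Fin N) (Fin N) ℝ) (hBtB : Bᵀ * B = 1)
    (w : Fin N → ℝ) : (B *ᵥ w) ⬝ᵥ (B *ᵥ w) = w ⬝ᵥ w := by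
  rw [Matrix.dotProduct_mulVec, ← Matrix.mulVec_transpose, Matrix.mulVec_mulVec, hBtB,
    Matrix.one_mulVec]

lemma real_summable_exp (μ : ℝ) : Summable fun n : ℕ => ((n.factorial : ℝ))⁻¹ * μ ^ n :=
  expSeries_summable' (𝕂 := ℝ) μ

lemma real_exp_tsum (μ : ℝ) : Real.exp μ = ∑' n : ℕ, ((n.factorial : ℝ))⁻¹ * μ ^ n := by
  rw [Real.exp_eq_exp_ℝ, exp_eq_tsum ℝ]
  simp [smul_eq_mul]

set_option maxHeartbeats 1000000 in
lemma exp_mulVec_eigen {N : ℕ} (A : Matrix (Fin N) (Fin N) ℝ) (w : Fin N → ℝ) (μ : ℝ)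
    (h : A.mulVec w = μ • w) : (NormedSpace.exp A).mulVec w = Real.exp μ • w := by
  letI : SeminormedRing (Matrix (Fin N) (Fin N) ℝ) := Matrix.linftyOpSemiNormedRing
  letI : NormedRing (Matrix (Fin N) (Fin N) ℝ) := Matrix.linftyOpNormedRing
  letI : NormedAlgebra ℝ (Matrix (Fin N) (Fin N) ℝ) := Matrix.linftyOpNormedAlgebra
  let L : Matrix (Fin N) (Fin N) ℝ →ₗ[ℝ] (Fin N → ℝ) :=
    { toFun := fun M => M.mulVec w
      map_add' := fun M1 M2 => Matrix.add_mulVec M1 M2 w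
      map_smul' := fun c M => Matrix.smul_mulVec c M w }
  have hLc : Continuous L := L.continuous_of_finiteDimensional
  let cL : Matrix (Fin N) (Fin N) ℝ →L[ℝ] (Fin N → ℝ) := ⟨L, hLc⟩
  have h1 : (NormedSpace.exp A).mulVec w = cL (NormedSpace.exp A) := rfl
  have hs : Summable fun n : ℕ => ((n.factorial : ℝ))⁻¹ • A ^ n := expSeries_summable' A
  rw [h1, exp_eq_tsum ℝ, cL.map_tsum hs]
  have h2 : ∀ n : ℕ, cL (((n.factorial : ℝ))⁻¹ • A ^ n) = (((n.factorial : ℝ))⁻¹ * μ ^ n) • w := by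
    intro n
    show (((n.factorial : ℝ))⁻¹ • A ^ n).mulVec w = _
    rw [Matrix.smul_mulVec, pow_mulVec_eigen A w μ h n, smul_smul]
  simp_rw [h2]
  rw [Summable.tsum_smul_const (real_summable_exp μ), real_exp_tsum μ]

/-- Convergence speed of the training error in the lazy regime: the squared
Euclidean training error decomposes along the eigendirections of the NTK. -/
theorem convergence_speed
    (N : ℕ) (hN : 1 ≤ N) (Θ : Matrix (Fin N) (Fin N) ℝ) (hΘ : Θ.IsSymm)
    (v : Fin N → Fin N → ℝ) (lam : Fin N → ℝ)
    (hev : ∀ i, Θ.mulVec (v i) = lam i • v i)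
    (horth : ∀ i j, v i ⬝ᵥ v j = if i = j then (1 : ℝ) else 0)
    (Y y0 : Fin N → ℝ) (η : ℝ) (hη : 0 < η)
    (yhat : ℝ → Fin N → ℝ)
    (hyhat : ∀ t, yhat t =
      ((1 : Matrix (Fin N) (Fin N) ℝ)
          - NormedSpace.exp ((-(η / N) * t) • Θ)).mulVec Y
        + (NormedSpace.exp ((-(η / N) * t) • Θ)).mulVec y0) :
    ∀ t : ℝ, 0 ≤ t →
      ∑ i, (yhat t i - Y i) ^ 2
        = ∑ i, Real.exp (-2 * (η / N) * lam i * t) * (v i ⬝ᵥ (y0 - Y)) ^ 2 := by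
  intro t ht
  set c : ℝ := -(η / N) * t with hc
  set E : Matrix (Fin N) (Fin N) ℝ := NormedSpace.exp (c • Θ) with hEdef
  set x : Fin N → ℝ := y0 - Y with hx
  -- E is symmetric
  have hcΘ : (c • Θ).IsSymm := by
    unfold Matrix.IsSymm
    rw [Matrix.transpose_smul, hΘ]
  have hEsymm : E.IsSymm := hcΘ.exp
  -- eigenvector action of E
  have hE : ∀ i, E.mulVec (v i) = Real.exp (c * lam i) • v i := by
    intro i
    apply exp_mulVec_eigen
    rw [Matrix.smul_mulVec, hev i, smul_smul]
  -- the error vector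
  have hkey : ∀ i, yhat t i - Y i = E.mulVec x i := by
    intro i
    rw [hyhat t]
    simp only [Pi.add_apply, Matrix.sub_mulVec, Matrix.one_mulVec, hx, Matrix.mulVec_sub,
      Pi.sub_apply]
    ring
  -- the matrix of eigenvectors
  set B : Matrix (Fin N) (Fin N) ℝ := Matrix.of v with hBdef
  have hB : B * Bᵀ = 1 := by
    ext i j
    rw [Matrix.mul_apply, Matrix.one_apply]
    simpa [Matrix.transpose_apply, hBdef, dotProduct] using horth i j
  have hBtB : Bᵀ * B = 1 := mul_eq_one_comm.mp hB
  -- Parseval-type identity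
  set w : Fin N → ℝ := E.mulVec x with hw
  have hpars : ∑ i, w i ^ 2 = ∑ i, (v i ⬝ᵥ w) ^ 2 := by
    have h1 : ∑ i, w i ^ 2 = w ⬝ᵥ w := by
      simp [dotProduct, sq]
    have h2 : w ⬝ᵥ w = (B *ᵥ w) ⬝ᵥ (B *ᵥ w) := (parseval_aux B hBtB w).symm
    have h3 : ∀ i, (B *ᵥ w) i = v i ⬝ᵥ w := fun i => rfl
    rw [h1, h2, dotProduct]
    exact Finset.sum_congr rfl fun i _ => by rw [h3, sq]
  -- eigen decomposition of each coefficient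
  have hcoef : ∀ i, v i ⬝ᵥ w = Real.exp (c * lam i) * (v i ⬝ᵥ x) := by
    intro i
    rw [hw, Matrix.dotProduct_mulVec, ← Matrix.mulVec_transpose, hEsymm, hE i,
      smul_dotProduct]
    rfl
  calc ∑ i, (yhat t i - Y i) ^ 2 = ∑ i, w i ^ 2 := by
        exact Finset.sum_congr rfl fun i _ => by rw [hkey i]
    _ = ∑ i, (v i ⬝ᵥ w) ^ 2 := hpars
    _ = ∑ i, Real.exp (-2 * (η / N) * lam i * t) * (v i ⬝ᵥ (y0 - Y)) ^ 2 := by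
        refine Finset.sum_congr rfl fun i _ => ?_
        rw [hcoef i, mul_pow, sq (Real.exp _), ← Real.exp_add]
        rw [hx, hc]
        ring_nf
end

section
/- Let N ≥ 1, let Θ₀ ∈ ℝ^{N×N} be a symmetric positive semidefinite matrix, let λ > 0, Y, ŷ₀ ∈ ℝ^N, η > 0, and let ŷ(t) = exp(−(η/N)·t·(Θ₀ + λI))·ŷ₀ + (I − exp(−(η/N)·t·(Θ₀ + λI)))·(Θ₀ + λI)⁻¹·(Θ₀·Y + λ·ŷ₀). Then ŷ(t) converges as t → ∞ to (Θ₀ + λI)⁻¹·(Θ₀·Y + λ·ŷ₀); in particular the regularized training output does not converge to the labels Y but to a smoothed solution. -/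
open Matrix NormedSpace Filter

theorem exp_smul_posdef_tendsto_zero
    {N : ℕ} {A : Matrix (Fin N) (Fin N) ℝ} (hA : A.PosDef)
    {c : ℝ} (hc : 0 < c) :
    Tendsto (fun t : ℝ => exp ((-c * t) • A)) atTop (nhds 0) := by
  have hH := hA.isHermitian
  set U : Matrix (Fin N) (Fin N) ℝ := (hH.eigenvectorUnitary : Matrix (Fin N) (Fin N) ℝ) with hU
  have h1 : U * star U = 1 := (Matrix.mem_unitaryGroup_iff).mp hH.eigenvectorUnitary.2
  have h2 : star U * U = 1 := (Matrix.mem_unitaryGroup_iff').mp hH.eigenvectorUnitary.2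
  have hUunit : IsUnit U := ⟨⟨U, star U, h1, h2⟩, rfl⟩
  have hUinv : U⁻¹ = star U := Matrix.inv_eq_right_inv h1
  have hspec : A = U * diagonal (RCLike.ofReal ∘ hH.eigenvalues) * U⁻¹ := by
    rw [hUinv]; exact hH.spectral_theorem
  have key : ∀ s : ℝ, exp (s • A)
      = U * diagonal (fun i => Real.exp (s * hH.eigenvalues i)) * U⁻¹ := by
    intro s
    conv_lhs => rw [hspec]
    have hsw : s • (U * diagonal (RCLike.ofReal ∘ hH.eigenvalues) * U⁻¹)
        = U * (s • diagonal (RCLike.ofReal ∘ hH.eigenvalues)) * U⁻¹ := by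
      simp [Matrix.smul_mul, Matrix.mul_smul]
    rw [hsw, Matrix.exp_conj U _ hUunit, ← diagonal_smul, Matrix.exp_diagonal, Pi.exp_def]
    congr 2
    funext i
    simp [Real.exp_eq_exp_ℝ, mul_comm]
  simp_rw [key]
  have hD : Tendsto (fun t : ℝ => diagonal (fun i => Real.exp ((-c * t) * hH.eigenvalues i)))
      atTop (nhds (0 : Matrix (Fin N) (Fin N) ℝ)) := by
    refine tendsto_pi_nhds.mpr ?_
    intro i
    rw [tendsto_pi_nhds]
    intro j
    by_cases hij : i = j
    · subst hij
      simp only [diagonal_apply_eq, Pi.zero_apply, Matrix.zero_apply]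
      apply Real.tendsto_exp_atBot.comp
      have hμ := hA.eigenvalues_pos i
      have h3 : Tendsto (fun t : ℝ => -((c * hH.eigenvalues i) * t)) atTop atBot :=
        tendsto_neg_atTop_atBot.comp (tendsto_id.const_mul_atTop (mul_pos hc hμ))
      have h4 : (fun t : ℝ => (-c * t) * hH.eigenvalues i)
          = fun t : ℝ => -((c * hH.eigenvalues i) * t) := by funext t; ring
      rw [h4]; exact h3
    · simp [diagonal_apply_ne _ hij]
  have hcont : Continuous fun M : Matrix (Fin N) (Fin N) ℝ => U * M * U⁻¹ :=
    (continuous_const.matrix_mul continuous_id).matrix_mul continuous_const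
  have := (hcont.tendsto 0).comp hD
  simpa [Function.comp_def] using this

/-- Under L²-regularized lazy training the output converges, as `t → ∞`, to
the smoothed solution `(Θ₀ + λI)⁻¹·(Θ₀·Y + λ·ŷ₀)` rather than to the labels. -/
theorem regularized_lazy_output_limit
    (N : ℕ) (hN : 1 ≤ N) (Θ : Matrix (Fin N) (Fin N) ℝ)
    (hΘ : Θ.PosSemidef) (lam : ℝ) (hlam : 0 < lam)
    (Y y0 : Fin N → ℝ) (η : ℝ) (hη : 0 < η)
    (yhat : ℝ → Fin N → ℝ)
    (hyhat : ∀ t, yhat t =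
      (exp ((-(η / N) * t) • (Θ + lam • (1 : Matrix (Fin N) (Fin N) ℝ)))).mulVec y0
        + ((1 : Matrix (Fin N) (Fin N) ℝ)
            - exp ((-(η / N) * t) • (Θ + lam • (1 : Matrix (Fin N) (Fin N) ℝ)))).mulVec
          ((Θ + lam • (1 : Matrix (Fin N) (Fin N) ℝ))⁻¹.mulVec (Θ.mulVec Y + lam • y0))) :
    Tendsto yhat atTop
      (nhds ((Θ + lam • (1 : Matrix (Fin N) (Fin N) ℝ))⁻¹.mulVec
        (Θ.mulVec Y + lam • y0))) := by
  set A : Matrix (Fin N) (Fin N) ℝ := Θ + lam • 1 with hAdef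
  have hA : A.PosDef := by
    refine Matrix.PosDef.posSemidef_add hΘ ?_
    rw [Matrix.smul_one_eq_diagonal]
    exact .diagonal fun _ => hlam
  set v : Fin N → ℝ := A⁻¹.mulVec (Θ.mulVec Y + lam • y0) with hv
  have hc : 0 < η / N := div_pos hη (by exact_mod_cast hN)
  have hexp := exp_smul_posdef_tendsto_zero hA hc
  have hcont : Continuous fun M : Matrix (Fin N) (Fin N) ℝ =>
      M.mulVec y0 + ((1 : Matrix (Fin N) (Fin N) ℝ) - M).mulVec v := by
    exact (continuous_id.matrix_mulVec continuous_const).add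
      ((continuous_const.sub continuous_id).matrix_mulVec continuous_const)
  have h := (hcont.tendsto 0).comp hexp
  have heq : yhat = (fun M : Matrix (Fin N) (Fin N) ℝ =>
      M.mulVec y0 + ((1 : Matrix (Fin N) (Fin N) ℝ) - M).mulVec v)
        ∘ (fun t : ℝ => exp ((-(η / N) * t) • A)) := by
    funext t; exact hyhat t
  rw [heq]
  simpa [Matrix.zero_mulVec, Matrix.one_mulVec] using h
end
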